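/- arXiv:1201.5856 — 3 statements merged into one kernel-verified Lean document; each statement's English description precedes it below -/
import Mathlib

section
/- Let B : [0,1] → ℝ be a C¹ function with B(0) ≥ 0, and suppose there is a function A : [0,1] → ℝ with 0 ≤ A(t) ≤ σ²t for all t, where 0 ≤ σ < 2, and B satisfies the ODE B'(t) = 4B(t)/(A(t)+B(t)) whenever A(t)+B(t) > 0. Then B(1) ≤ 4 + B(0), and if additionally 4 - σ² > 0 and B(0) > 0, then B(t) ≥ (4-σ²)t for all t ∈ [0,1]. -/
open Set Filter Topology

/-- Barrier lemma: if `g` is continuous on `[0,1]`, positive at `0`, and has a positive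
derivative at every zero, then `g` is positive on `[0,1]`. -/
lemma barrier_pos (g : ℝ → ℝ) (hg : ContinuousOn g (Set.Icc 0 1)) (h0 : 0 < g 0)
    (hd : ∀ t ∈ Set.Icc (0:ℝ) 1, g t = 0 → ∃ d, 0 < d ∧ HasDerivAt g d t) :
    ∀ t ∈ Set.Icc (0:ℝ) 1, 0 < g t := by
  by_contra h
  push_neg at h
  obtain ⟨t₀, ht₀, hgt₀⟩ := h
  have hScl : IsClosed (Set.Icc (0:ℝ) 1 ∩ g ⁻¹' Set.Iic 0) :=
    hg.preimage_isClosed_of_isClosed isClosed_Icc isClosed_Iic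
  set S := Set.Icc (0:ℝ) 1 ∩ g ⁻¹' Set.Iic 0 with hSdef
  have hSne : S.Nonempty := ⟨t₀, ht₀, hgt₀⟩
  have hSbdd : BddBelow S := ⟨0, fun x hx => hx.1.1⟩
  have ht₁S : sInf S ∈ S := hScl.csInf_mem hSne hSbdd
  set t₁ := sInf S with ht₁def
  have ht₁0 : 0 < t₁ := by
    rcases lt_or_eq_of_le ht₁S.1.1 with h | h
    · exact h
    · exfalso
      have h2 : g t₁ ≤ 0 := ht₁S.2
      rw [← h] at h2
      linarith
  have hlt : ∀ t, 0 ≤ t → t < t₁ → 0 < g t := by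
    intro t ht0 htlt
    by_contra hc
    push_neg at hc
    have : t ∈ S := ⟨⟨ht0, htlt.le.trans ht₁S.1.2⟩, hc⟩
    exact absurd (csInf_le hSbdd this) (not_le.mpr htlt)
  have hFne : (𝓝[Set.Ioo 0 t₁] t₁).NeBot := by
    refine mem_closure_iff_nhdsWithin_neBot.mp ?_
    rw [closure_Ioo ht₁0.ne]
    exact ⟨ht₁0.le, le_refl _⟩
  have hsub : Set.Ioo 0 t₁ ⊆ Set.Icc 0 1 := fun x hx => ⟨hx.1.le, hx.2.le.trans ht₁S.1.2⟩
  have hmem : ∀ᶠ t in 𝓝[Set.Ioo 0 t₁] t₁, t ∈ Set.Ioo 0 t₁ := self_mem_nhdsWithin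
  have hge : 0 ≤ g t₁ := by
    have htend : Filter.Tendsto g (𝓝[Set.Ioo 0 t₁] t₁) (𝓝 (g t₁)) :=
      (hg t₁ ht₁S.1).mono hsub
    refine ge_of_tendsto htend ?_
    filter_upwards [hmem] with t ht
    exact (hlt t ht.1.le ht.2).le
  have hgz : g t₁ = 0 := le_antisymm ht₁S.2 hge
  obtain ⟨d, hd0, hder⟩ := hd t₁ ht₁S.1 hgz
  have hslope : Filter.Tendsto (slope g t₁) (𝓝[≠] t₁) (𝓝 d) :=
    hasDerivAt_iff_tendsto_slope.mp hder
  have hle : 𝓝[Set.Ioo 0 t₁] t₁ ≤ 𝓝[≠] t₁ :=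
    nhdsWithin_mono _ (fun x hx => ne_of_lt hx.2)
  have hpos : ∀ᶠ t in 𝓝[Set.Ioo 0 t₁] t₁, 0 < slope g t₁ t :=
    (hslope.mono_left hle).eventually (eventually_gt_nhds hd0)
  obtain ⟨t, hts, htIoo⟩ := (hpos.and hmem).exists
  have hgt : 0 < g t := hlt t htIoo.1.le htIoo.2
  have hneg : slope g t₁ t < 0 := by
    rw [slope_def_field, hgz, sub_zero]
    exact div_neg_of_pos_of_neg hgt (by linarith [htIoo.2])
  linarith

/-- ODE comparison lemma behind the bound `4 - σ² ≤ (Im γ(1))² ≤ 4` for the tip of a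
Loewner slit with σ-Lip(1/2) driving function. -/
theorem stmt_0 (A B : ℝ → ℝ) (σ : ℝ) (hσ0 : 0 ≤ σ) (hσ2 : σ < 2)
    (hB0 : 0 ≤ B 0) (hBC1 : ContDiffOn ℝ 1 B (Set.Icc 0 1))
    (hA : ∀ t ∈ Set.Icc (0:ℝ) 1, 0 ≤ A t ∧ A t ≤ σ ^ 2 * t)
    (hODE : ∀ t ∈ Set.Icc (0:ℝ) 1, 0 < A t + B t →
      HasDerivAt B (4 * B t / (A t + B t)) t) :
    B 1 ≤ 4 + B 0 ∧
      (0 < 4 - σ ^ 2 → 0 < B 0 → ∀ t ∈ Set.Icc (0:ℝ) 1, (4 - σ ^ 2) * t ≤ B t) := by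
  have hBcont : ContinuousOn B (Set.Icc 0 1) := hBC1.continuousOn
  constructor
  · -- upper bound
    refine le_of_forall_pos_le_add ?_
    intro ε hε
    set δ := ε / 2 with hδdef
    have hδ : 0 < δ := by positivity
    set g : ℝ → ℝ := fun t => (4 + δ) * t + (B 0 + δ) - B t with hgdef
    have hgcont : ContinuousOn g (Set.Icc 0 1) := by
      apply ContinuousOn.sub _ hBcont
      fun_prop
    have hg0 : 0 < g 0 := by simp [hgdef]; linarith
    have key : ∀ t ∈ Set.Icc (0:ℝ) 1, 0 < g t := by
      refine barrier_pos g hgcont hg0 ?_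
      intro t ht hgt
      have hBt : B t = (4 + δ) * t + (B 0 + δ) := by
        have := hgt; simp [hgdef] at this; linarith
      have hBtpos : 0 < B t := by
        have ht0 : 0 ≤ t := ht.1
        nlinarith
      have hABpos : 0 < A t + B t := by
        have := (hA t ht).1; linarith
      have hder := hODE t ht hABpos
      refine ⟨(4 + δ) - 4 * B t / (A t + B t), ?_, ?_⟩
      · have h4 : 4 * B t / (A t + B t) ≤ 4 := by
          rw [div_le_iff₀ hABpos]
          have := (hA t ht).1
          nlinarith
        linarith
      · have hlin : HasDerivAt (fun t : ℝ => (4 + δ) * t + (B 0 + δ)) (4 + δ) t := by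
          simpa using (((hasDerivAt_id t).const_mul (4 + δ)).add_const (B 0 + δ))
        exact hlin.sub hder
    have h1 := key 1 (by norm_num)
    simp [hgdef] at h1
    linarith
  · -- lower bound
    intro hc hB0'
    intro t ht
    refine le_of_forall_pos_le_add ?_
    intro η hη
    set c := 4 - σ ^ 2 with hcdef
    set ε := min η (c / 2) with hεdef
    have hε0 : 0 < ε := lt_min hη (by linarith)
    have hεc : ε < c := (min_le_right _ _).trans_lt (by linarith)
    have hεη : ε ≤ η := min_le_left _ _
    set δ := B 0 / 2 with hδdef
    have hδ0 : 0 < δ := by positivity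
    set g : ℝ → ℝ := fun t => B t - ((c - ε) * t + δ) with hgdef
    have hgcont : ContinuousOn g (Set.Icc 0 1) := by
      apply ContinuousOn.sub hBcont
      fun_prop
    have hg0 : 0 < g 0 := by simp [hgdef, hδdef]; linarith
    have key : ∀ s ∈ Set.Icc (0:ℝ) 1, 0 < g s := by
      refine barrier_pos g hgcont hg0 ?_
      intro s hs hgs
      have hBs : B s = (c - ε) * s + δ := by
        have := hgs; simp [hgdef] at this; linarith
      have hs0 : (0:ℝ) ≤ s := hs.1
      have hBspos : 0 < B s := by nlinarith
      have hA1 := (hA s hs).1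
      have hA2 := (hA s hs).2
      have hABpos : 0 < A s + B s := by linarith
      have hder := hODE s hs hABpos
      refine ⟨4 * B s / (A s + B s) - (c - ε), ?_, ?_⟩
      · have : c - ε < 4 * B s / (A s + B s) := by
          rw [lt_div_iff₀ hABpos]
          nlinarith
        linarith
      · have hlin : HasDerivAt (fun u : ℝ => (c - ε) * u + δ) (c - ε) s := by
          simpa using (((hasDerivAt_id s).const_mul (c - ε)).add_const δ)
        exact hder.sub hlin
    have h1 := key t ht
    simp [hgdef] at h1
    have ht1 : t ≤ 1 := ht.2
    have ht0 : (0:ℝ) ≤ t := ht.1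
    nlinarith
end

section
/- Let λ : [0,1] → ℝ satisfy λ(0) = 0 and |λ(t₁)-λ(t₂)| ≤ σ|t₁-t₂|^(1/2) for all t₁,t₂, with 0 ≤ σ < 4, and let γ = γ^λ be the generated Loewner slit parametrized by half-plane capacity. Then |Re γ(1)| ≤ σ and 4 - σ² ≤ (Im γ(1))² ≤ 4. -/
open Set


private lemma eps_le {a b : ℝ} (h : ∀ ε : ℝ, 0 < ε → a ≤ b + ε) : a ≤ b := by
  by_contra hc
  push_neg at hc
  have := h ((a - b) / 2) (by linarith)
  linarith

/-- Core real-variable estimates for a reverse Loewner trajectory. -/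
private lemma loewner_key (σ : ℝ) (hσ0 : 0 ≤ σ) (ξ : ℝ → ℝ) (F : ℝ → ℂ) (y : ℝ) (hy : 0 < y)
    (hHol : ∀ s₁ ∈ Icc (0:ℝ) 1, ∀ s₂ ∈ Icc (0:ℝ) 1,
      |ξ s₁ - ξ s₂| ≤ σ * |s₁ - s₂| ^ ((1:ℝ)/2))
    (hF0 : F 0 = (ξ 0 : ℂ) + (y : ℂ) * Complex.I)
    (hFim : ∀ s ∈ Icc (0:ℝ) 1, 0 < (F s).im)
    (hFode : ∀ s ∈ Icc (0:ℝ) 1, HasDerivAt F (-(2 / (F s - (ξ s : ℂ)))) s) :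
    |(F 1).re - ξ 1| ≤ σ ∧ (∀ k : ℝ, 0 < k → k + σ ^ 2 < 4 → k ≤ (F 1).im ^ 2)
      ∧ (F 1).im ^ 2 ≤ y ^ 2 + 4 := by
  classical
  set D : ℝ → ℝ := fun s => Complex.normSq (F s - (ξ s : ℂ)) with hD_def
  have hone : (1:ℝ) ∈ Icc (0:ℝ) 1 := by norm_num
  have hzero : (0:ℝ) ∈ Icc (0:ℝ) 1 := by norm_num
  have hsub_im : ∀ s, (F s - (ξ s : ℂ)).im = (F s).im := by
    intro s; simp [Complex.sub_im]
  have hsub_re : ∀ s, (F s - (ξ s : ℂ)).re = (F s).re - ξ s := by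
    intro s; simp [Complex.sub_re]
  have hDpos : ∀ s ∈ Icc (0:ℝ) 1, 0 < D s := by
    intro s hs
    refine Complex.normSq_pos.2 (fun h => ?_)
    have h2 := hsub_im s
    rw [h, Complex.zero_im] at h2
    exact (hFim s hs).ne h2
  have hDform : ∀ s, D s = ((F s).re - ξ s) ^ 2 + (F s).im ^ 2 := by
    intro s
    rw [hD_def]
    simp only [Complex.normSq_apply, hsub_re, hsub_im]
    ring
  have hF0re : (F 0).re = ξ 0 := by rw [hF0]; simp
  have hF0im : (F 0).im = y := by rw [hF0]; simp
  -- continuity of F on Icc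
  have hFc : ContinuousOn F (Icc (0:ℝ) 1) := fun s hs =>
    (hFode s hs).continuousAt.continuousWithinAt
  have hxc : ContinuousOn (fun s => (F s).re) (Icc (0:ℝ) 1) :=
    Complex.continuous_re.comp_continuousOn hFc
  have hvc : ContinuousOn (fun s => (F s).im) (Icc (0:ℝ) 1) :=
    Complex.continuous_im.comp_continuousOn hFc
  -- derivatives of real and imaginary parts
  have hx : ∀ s ∈ Icc (0:ℝ) 1,
      HasDerivAt (fun t => (F t).re) (-(2 * ((F s).re - ξ s) / D s)) s := by
    intro s hs
    have h : HasDerivAt (fun t => (F t).re) (Complex.reCLM (-(2 / (F s - (ξ s : ℂ))))) s :=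
      Complex.reCLM.hasFDerivAt.comp_hasDerivAt s (hFode s hs)
    convert h using 1
    show -(2 * ((F s).re - ξ s) / D s) = (-(2 / (F s - (ξ s : ℂ)))).re
    rw [Complex.neg_re, Complex.div_re, hsub_re, hsub_im]
    simp [hD_def]
  have hv : ∀ s ∈ Icc (0:ℝ) 1,
      HasDerivAt (fun t => (F t).im) (2 * (F s).im / D s) s := by
    intro s hs
    have h : HasDerivAt (fun t => (F t).im) (Complex.imCLM (-(2 / (F s - (ξ s : ℂ))))) s :=
      Complex.imCLM.hasFDerivAt.comp_hasDerivAt s (hFode s hs)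
    convert h using 1
    show 2 * (F s).im / D s = (-(2 / (F s - (ξ s : ℂ)))).im
    rw [Complex.neg_im, Complex.div_im, hsub_re, hsub_im]
    simp [hD_def]
  have hψ : ∀ s ∈ Icc (0:ℝ) 1,
      HasDerivAt (fun t => (F t).im ^ 2) (4 * (F s).im ^ 2 / D s) s := by
    intro s hs
    have h : HasDerivAt (fun t => (F t).im ^ 2) _ s := (hv s hs).pow 2
    convert h using 1
    push_cast
    ring
  -- upper barrier for the real part
  have hxupper : ∀ s₀ ∈ Icc (0:ℝ) 1, (F s₀).re ≤ ξ s₀ + σ * s₀ ^ ((1:ℝ)/2) := by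
    intro s₀ hs₀
    apply eps_le
    intro ε hε
    have hsub : Icc (0:ℝ) s₀ ⊆ Icc (0:ℝ) 1 := Icc_subset_Icc_right hs₀.2
    have key := image_le_of_deriv_right_lt_deriv_boundary
      (f := fun s => (F s).re) (f' := fun s => -(2 * ((F s).re - ξ s) / D s))
      (a := 0) (b := s₀)
      (B := fun _ => ξ s₀ + σ * s₀ ^ ((1:ℝ)/2) + ε) (B' := fun _ => 0)
      (hxc.mono hsub)
      (fun s hs => ((hx s (hsub (Ico_subset_Icc_self hs))).hasDerivWithinAt))
      ?_ (fun _ => hasDerivAt_const _ _) ?_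
    · have := key (right_mem_Icc.2 hs₀.1)
      linarith
    · -- value at 0
      show (F 0).re ≤ ξ s₀ + σ * s₀ ^ ((1:ℝ)/2) + ε
      have h1 := hHol 0 hzero s₀ hs₀
      rw [abs_of_nonpos (by linarith [hs₀.1] : (0:ℝ) - s₀ ≤ 0), neg_sub, sub_zero] at h1
      have habs := (abs_le.1 h1).2
      rw [hF0re]
      linarith
    · -- contact condition
      intro s hs hcontact
      have hc : (F s).re = ξ s₀ + σ * s₀ ^ ((1:ℝ)/2) + ε := hcontact
      have hs1 : s ∈ Icc (0:ℝ) 1 := hsub (Ico_subset_Icc_self hs)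
      have hξs : ξ s ≤ ξ s₀ + σ * s₀ ^ ((1:ℝ)/2) := by
        have h1 := hHol s hs1 s₀ hs₀
        rw [abs_of_nonpos (by linarith [hs.2] : s - s₀ ≤ 0), neg_sub] at h1
        have h2 : σ * (s₀ - s) ^ ((1:ℝ)/2) ≤ σ * s₀ ^ ((1:ℝ)/2) := by
          apply mul_le_mul_of_nonneg_left _ hσ0
          exact Real.rpow_le_rpow (by linarith [hs.2]) (by linarith [hs.1]) (by norm_num)
        have := (abs_le.1 h1).2
        linarith
      have hgt : 0 < (F s).re - ξ s := by rw [hc]; linarith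
      have hlt : 0 < 2 * ((F s).re - ξ s) / D s := div_pos (by linarith) (hDpos s hs1)
      show -(2 * ((F s).re - ξ s) / D s) < 0
      linarith
  -- lower barrier for the real part
  have hxlower : ∀ s₀ ∈ Icc (0:ℝ) 1, ξ s₀ - σ * s₀ ^ ((1:ℝ)/2) ≤ (F s₀).re := by
    intro s₀ hs₀
    have hmain : -(F s₀).re ≤ -ξ s₀ + σ * s₀ ^ ((1:ℝ)/2) := by
      apply eps_le
      intro ε hε
      have hsub : Icc (0:ℝ) s₀ ⊆ Icc (0:ℝ) 1 := Icc_subset_Icc_right hs₀.2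
      have key := image_le_of_deriv_right_lt_deriv_boundary
        (f := fun s => -(F s).re) (f' := fun s => 2 * ((F s).re - ξ s) / D s)
        (a := 0) (b := s₀)
        (B := fun _ => -ξ s₀ + σ * s₀ ^ ((1:ℝ)/2) + ε) (B' := fun _ => 0)
        (hxc.mono hsub).neg
        (fun s hs => by
          have h := (hx s (hsub (Ico_subset_Icc_self hs))).neg
          rw [neg_neg] at h
          exact h.hasDerivWithinAt)
        ?_ (fun _ => hasDerivAt_const _ _) ?_
      · have := key (right_mem_Icc.2 hs₀.1)
        linarith
      · show -(F 0).re ≤ -ξ s₀ + σ * s₀ ^ ((1:ℝ)/2) + ε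
        have h1 := hHol 0 hzero s₀ hs₀
        rw [abs_of_nonpos (by linarith [hs₀.1] : (0:ℝ) - s₀ ≤ 0), neg_sub, sub_zero] at h1
        have habs := (abs_le.1 h1).1
        rw [hF0re]
        linarith
      · intro s hs hcontact
        have hc : -(F s).re = -ξ s₀ + σ * s₀ ^ ((1:ℝ)/2) + ε := hcontact
        have hs1 : s ∈ Icc (0:ℝ) 1 := hsub (Ico_subset_Icc_self hs)
        have hξs : ξ s₀ - σ * s₀ ^ ((1:ℝ)/2) ≤ ξ s := by
          have h1 := hHol s hs1 s₀ hs₀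
          rw [abs_of_nonpos (by linarith [hs.2] : s - s₀ ≤ 0), neg_sub] at h1
          have h2 : σ * (s₀ - s) ^ ((1:ℝ)/2) ≤ σ * s₀ ^ ((1:ℝ)/2) := by
            apply mul_le_mul_of_nonneg_left _ hσ0
            exact Real.rpow_le_rpow (by linarith [hs.2]) (by linarith [hs.1]) (by norm_num)
          have := (abs_le.1 h1).1
          linarith
        have hlt : (F s).re - ξ s < 0 := by
          have hre : (F s).re = ξ s₀ - σ * s₀ ^ ((1:ℝ)/2) - ε := by linarith
          rw [hre]; linarith
        show 2 * ((F s).re - ξ s) / D s < 0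
        exact div_neg_of_neg_of_pos (by linarith) (hDpos s hs1)
    linarith
  -- square bound for the drift term
  have hq : ∀ s ∈ Icc (0:ℝ) 1, ((F s).re - ξ s) ^ 2 ≤ σ ^ 2 * s := by
    intro s hs
    have habs : |(F s).re - ξ s| ≤ σ * s ^ ((1:ℝ)/2) :=
      abs_le.2 ⟨by linarith [hxlower s hs], by linarith [hxupper s hs]⟩
    have hs2 : (s ^ ((1:ℝ)/2)) ^ 2 = s := by
      rw [← Real.rpow_natCast (s ^ ((1:ℝ)/2)) 2, ← Real.rpow_mul hs.1]
      norm_num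
    calc ((F s).re - ξ s) ^ 2 = |(F s).re - ξ s| ^ 2 := (sq_abs _).symm
      _ ≤ (σ * s ^ ((1:ℝ)/2)) ^ 2 := by
          apply pow_le_pow_left₀ (abs_nonneg _) habs
      _ = σ ^ 2 * s := by rw [mul_pow, hs2]
  refine ⟨?_, ?_, ?_⟩
  · -- |Re F 1 - ξ 1| ≤ σ
    have h1 := hxupper 1 hone
    have h2 := hxlower 1 hone
    rw [Real.one_rpow] at h1 h2
    rw [abs_le]
    constructor <;> linarith
  · -- lower bound on (Im F 1)^2
    intro k hk hk4
    have key := image_le_of_deriv_right_lt_deriv_boundary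
      (f := fun s => k * s - (F s).im ^ 2)
      (f' := fun s => k - 4 * (F s).im ^ 2 / D s)
      (a := 0) (b := 1) (B := fun _ => 0) (B' := fun _ => 0)
      (((continuous_const.mul continuous_id).continuousOn).sub (hvc.pow 2))
      (fun s hs => by
        have h : HasDerivAt (fun u => k * u - (F u).im ^ 2) _ s :=
          ((hasDerivAt_id s).const_mul k).sub (hψ s (Ico_subset_Icc_self hs))
        have h2 : HasDerivAt (fun u => k * u - (F u).im ^ 2)
            (k - 4 * (F s).im ^ 2 / D s) s := by
          convert h using 1; ring
        exact h2.hasDerivWithinAt)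
      ?_ (fun _ => hasDerivAt_const _ _) ?_
    · have := key hone
      have h1 : k * 1 - (F 1).im ^ 2 ≤ 0 := this
      linarith
    · show k * 0 - (F 0).im ^ 2 ≤ 0
      rw [hF0im]
      nlinarith
    · intro s hs hcontact
      have hc : k * s - (F s).im ^ 2 = 0 := hcontact
      have hs1 : s ∈ Icc (0:ℝ) 1 := Ico_subset_Icc_self hs
      have hψs : (F s).im ^ 2 = k * s := by linarith
      have hspos : 0 < s := by
        rcases lt_or_eq_of_le hs.1 with h | h
        · exact h
        · exfalso
          rw [← h] at hψs
          rw [hF0im] at hψs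
          nlinarith
      have hDle : D s ≤ (σ ^ 2 + k) * s := by
        rw [hDform s, hψs]
        have := hq s hs1
        linarith
      have hkey : k * D s < 4 * ((F s).im ^ 2) := by
        rw [hψs]
        have hfac : 0 < (4 - (σ ^ 2 + k)) * (k * s) :=
          mul_pos (by linarith) (mul_pos hk hspos)
        calc k * D s ≤ k * ((σ ^ 2 + k) * s) :=
              mul_le_mul_of_nonneg_left hDle (le_of_lt hk)
          _ < 4 * (k * s) := by nlinarith [hfac]
      have hlt : k < 4 * (F s).im ^ 2 / D s := (lt_div_iff₀ (hDpos s hs1)).2 (by linarith)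
      show k - 4 * (F s).im ^ 2 / D s < 0
      linarith
  · -- upper bound on (Im F 1)^2
    have key := image_le_of_deriv_right_le_deriv_boundary
      (f := fun s => (F s).im ^ 2) (f' := fun s => 4 * (F s).im ^ 2 / D s)
      (a := 0) (b := 1) (B := fun s => y ^ 2 + 4 * s) (B' := fun _ => 4)
      (hvc.pow 2)
      (fun s hs => (hψ s (Ico_subset_Icc_self hs)).hasDerivWithinAt)
      ?_ ?_ ?_ ?_
    · have h1 : (F 1).im ^ 2 ≤ y ^ 2 + 4 * 1 := key hone
      linarith
    · show (F 0).im ^ 2 ≤ y ^ 2 + 4 * 0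
      rw [hF0im]
      nlinarith
    · exact (continuous_const.add (continuous_const.mul continuous_id)).continuousOn
    · intro s hs
      have h : HasDerivAt (fun u => y ^ 2 + 4 * u) _ s :=
        ((hasDerivAt_id s).const_mul 4).const_add (y ^ 2)
      have h2 : HasDerivAt (fun u => y ^ 2 + 4 * u) (4:ℝ) s := by
        convert h using 1; ring
      exact h2.hasDerivWithinAt
    · intro s hs
      have hs1 : s ∈ Icc (0:ℝ) 1 := Ico_subset_Icc_self hs
      have hDp := hDpos s hs1
      show 4 * (F s).im ^ 2 / D s ≤ 4
      rw [div_le_iff₀ hDp]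
      have : (F s).im ^ 2 ≤ D s := by
        rw [hDform s]
        nlinarith [sq_nonneg ((F s).re - ξ s)]
      nlinarith


/-- The chordal Loewner data of a slit `γ` with driving function `lam` on `[0,T]`:
`g t` is the hydrodynamically normalized conformal map from
`H_t = ℍ \ γ([0,t])` onto the upper half-plane `ℍ`, with spatial derivative `g'` and
inverse `f`, and `γ` is parametrized by half-plane capacity (`hcap = 2t`, which is
encoded by the factor `2` in the Loewner ODE). -/
structure LoewnerData (T : ℝ) (lam : ℝ → ℝ) (γ : ℝ → ℂ) (g g' f : ℝ → ℂ → ℂ) : Prop where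
  T_pos : 0 < T
  lam_cont : ContinuousOn lam (Icc 0 T)
  -- γ is a slit: a simple curve in the closed upper half-plane, meeting ℝ only at γ(0)=λ(0)
  slit_cont : ContinuousOn γ (Icc 0 T)
  slit_inj : InjOn γ (Icc 0 T)
  slit_base : γ 0 = (lam 0 : ℂ)
  slit_im_pos : ∀ t, 0 < t → t ≤ T → 0 < (γ t).im
  -- initial condition of the flow
  flow_init : ∀ z, g 0 z = z
  -- the chordal Loewner differential equation ∂ₜ g = 2/(g - λ)
  flow_ode : ∀ t ∈ Icc (0:ℝ) T, ∀ z ∈ {w : ℂ | 0 < w.im} \ γ '' Icc 0 t,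
    HasDerivAt (fun s => g s z) (2 / (g t z - (lam t : ℂ))) t
  -- g t is a bijection from H_t onto ℍ
  flow_bij : ∀ t ∈ Icc (0:ℝ) T,
    BijOn (g t) ({w : ℂ | 0 < w.im} \ γ '' Icc 0 t) {w : ℂ | 0 < w.im}
  -- g' is the spatial (complex) derivative of g
  flow_deriv : ∀ t ∈ Icc (0:ℝ) T, ∀ z ∈ {w : ℂ | 0 < w.im} \ γ '' Icc 0 t,
    HasDerivAt (g t) (g' t z) z
  -- f t is the inverse conformal map
  flow_inv : ∀ t ∈ Icc (0:ℝ) T, ∀ z ∈ {w : ℂ | 0 < w.im} \ γ '' Icc 0 t,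
    f t (g t z) = z
  -- hydrodynamic normalization: g t (z) - z → 0 as z → ∞
  hydro : ∀ t ∈ Icc (0:ℝ) T, Filter.Tendsto (fun y : ℝ => g t (y * Complex.I) - y * Complex.I)
    Filter.atTop (nhds 0)
  -- the tip of the slit: γ(t) = lim_{y↓0} f_t(λ(t) + iy)
  tip : ∀ t ∈ Icc (0:ℝ) T, Filter.Tendsto (fun y : ℝ => f t ((lam t : ℂ) + y * Complex.I))
    (nhdsWithin 0 (Ioi 0)) (nhds (γ t))

/-- For a σ-Lip(1/2) driving function on `[0,1]` with `λ(0) = 0` and `0 ≤ σ < 4`,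
the tip of the generated slit satisfies `|Re γ(1)| ≤ σ` and `4 - σ² ≤ (Im γ(1))² ≤ 4`. -/
theorem stmt_10 (σ : ℝ) (hσ0 : 0 ≤ σ) (hσ4 : σ < 4)
    (lam : ℝ → ℝ) (γ : ℝ → ℂ) (g g' f : ℝ → ℂ → ℂ)
    (hL : LoewnerData 1 lam γ g g' f)
    (hlam0 : lam 0 = 0)
    (hLip : ∀ t₁ ∈ Icc (0:ℝ) 1, ∀ t₂ ∈ Icc (0:ℝ) 1,
      |lam t₁ - lam t₂| ≤ σ * |t₁ - t₂| ^ ((1:ℝ)/2)) :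
    |(γ 1).re| ≤ σ ∧ 4 - σ ^ 2 ≤ (γ 1).im ^ 2 ∧ (γ 1).im ^ 2 ≤ 4 := by
  classical
  have h1mem : (1:ℝ) ∈ Icc (0:ℝ) 1 := by norm_num
  -- per-y estimates on the preimage point
  have hy_facts : ∀ y : ℝ, y ∈ Ioi (0:ℝ) →
      |(f 1 ((lam 1 : ℂ) + (y:ℝ) * Complex.I)).re| ≤ σ ∧
      (∀ k : ℝ, 0 < k → k + σ ^ 2 < 4 →
        k ≤ (f 1 ((lam 1 : ℂ) + (y:ℝ) * Complex.I)).im ^ 2) ∧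
      (f 1 ((lam 1 : ℂ) + (y:ℝ) * Complex.I)).im ^ 2 ≤ y ^ 2 + 4 := by
    intro y hy
    rw [mem_Ioi] at hy
    have hmem : ((lam 1 : ℂ) + (y:ℝ) * Complex.I) ∈ {w : ℂ | 0 < w.im} := by
      show (0:ℝ) < ((lam 1 : ℂ) + (y:ℝ) * Complex.I).im
      simp [Complex.add_im]
      exact hy
    obtain ⟨z, hzDom, hgz⟩ := (hL.flow_bij 1 h1mem).surjOn hmem
    have hfz : f 1 ((lam 1 : ℂ) + (y:ℝ) * Complex.I) = z := by
      rw [← hgz]; exact hL.flow_inv 1 h1mem z hzDom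
    rw [hfz]
    set ξ : ℝ → ℝ := fun s => lam (1 - s) with hξdef
    set F : ℝ → ℂ := fun s => g (1 - s) z with hFdef
    have hDomt : ∀ s ∈ Icc (0:ℝ) 1, z ∈ {w : ℂ | 0 < w.im} \ γ '' Icc 0 (1 - s) := by
      intro s hs
      exact ⟨hzDom.1, fun hmem' =>
        hzDom.2 (image_mono (Icc_subset_Icc_right (by linarith [hs.1])) hmem')⟩
    have h1s : ∀ s ∈ Icc (0:ℝ) 1, (1 - s) ∈ Icc (0:ℝ) 1 := by
      intro s hs; exact ⟨by linarith [hs.2], by linarith [hs.1]⟩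
    have hFim : ∀ s ∈ Icc (0:ℝ) 1, 0 < (F s).im := by
      intro s hs
      exact (hL.flow_bij (1 - s) (h1s s hs)).mapsTo (hDomt s hs)
    have hFode : ∀ s ∈ Icc (0:ℝ) 1, HasDerivAt F (-(2 / (F s - (ξ s : ℂ)))) s := by
      intro s hs
      have h := hL.flow_ode (1 - s) (h1s s hs) z (hDomt s hs)
      have hin : HasDerivAt (fun u : ℝ => 1 - u) (-1 : ℝ) s := by
        simpa using (hasDerivAt_id s).const_sub 1
      have h2 : HasDerivAt (fun u : ℝ => g (1 - u) z) _ s := h.scomp s hin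
      have h3 : HasDerivAt (fun u : ℝ => g (1 - u) z)
          (-(2 / (g (1 - s) z - (lam (1 - s) : ℂ)))) s := by
        convert h2 using 1
        · rw [neg_smul, one_smul]
      exact h3
    have hF0 : F 0 = (ξ 0 : ℂ) + (y : ℂ) * Complex.I := by
      show g (1 - 0) z = ((lam (1 - 0) : ℝ) : ℂ) + (y : ℂ) * Complex.I
      rw [show (1:ℝ) - 0 = 1 by norm_num, hgz]
    have hHolξ : ∀ s₁ ∈ Icc (0:ℝ) 1, ∀ s₂ ∈ Icc (0:ℝ) 1,
        |ξ s₁ - ξ s₂| ≤ σ * |s₁ - s₂| ^ ((1:ℝ)/2) := by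
      intro s₁ hs₁ s₂ hs₂
      have h := hLip (1 - s₁) (h1s s₁ hs₁) (1 - s₂) (h1s s₂ hs₂)
      have heq : (1 - s₁) - (1 - s₂) = s₂ - s₁ := by ring
      rw [heq] at h
      rw [abs_sub_comm s₂ s₁] at h
      exact h
    obtain ⟨K1, K2, K3⟩ := loewner_key σ hσ0 ξ F y hy hHolξ hF0 hFim hFode
    have hF1 : F 1 = z := by
      show g (1 - 1) z = z
      rw [show (1:ℝ) - 1 = 0 by norm_num, hL.flow_init]
    have hξ1 : ξ 1 = 0 := by
      show lam (1 - 1) = 0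
      rw [show (1:ℝ) - 1 = 0 by norm_num, hlam0]
    rw [hF1, hξ1, sub_zero] at K1
    rw [hF1] at K2 K3
    exact ⟨K1, K2, K3⟩
  -- pass to the limit y → 0+
  have htip := hL.tip 1 h1mem
  have hre : Filter.Tendsto (fun y : ℝ => (f 1 ((lam 1 : ℂ) + (y:ℝ) * Complex.I)).re)
      (nhdsWithin 0 (Ioi 0)) (nhds (γ 1).re) :=
    (Complex.continuous_re.tendsto _).comp htip
  have him2 : Filter.Tendsto (fun y : ℝ => (f 1 ((lam 1 : ℂ) + (y:ℝ) * Complex.I)).im ^ 2)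
      (nhdsWithin 0 (Ioi 0)) (nhds ((γ 1).im ^ 2)) :=
    ((Complex.continuous_im.tendsto _).comp htip).pow 2
  refine ⟨?_, ?_, ?_⟩
  · exact le_of_tendsto hre.abs
      (eventually_nhdsWithin_of_forall (fun y hy => (hy_facts y hy).1))
  · apply eps_le
    intro ε hε
    rcases le_or_gt (4 - σ ^ 2 - ε) 0 with h | h
    · nlinarith [sq_nonneg (γ 1).im]
    · have hk4 : (4 - σ ^ 2 - ε) + σ ^ 2 < 4 := by linarith
      have := ge_of_tendsto him2
        (eventually_nhdsWithin_of_forall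
          (fun y hy => (hy_facts y hy).2.1 (4 - σ ^ 2 - ε) h hk4))
      linarith
  · have hquad : Filter.Tendsto (fun y : ℝ => y ^ 2 + 4)
        (nhdsWithin 0 (Ioi 0)) (nhds 4) := by
      have h : Filter.Tendsto (fun y : ℝ => y ^ 2 + 4) (nhds 0) (nhds ((0:ℝ) ^ 2 + 4)) :=
        ((continuous_pow 2).add continuous_const).tendsto 0
      have h2 := h.mono_left (nhdsWithin_le_nhds (s := Ioi (0:ℝ)))
      simpa using h2
    exact le_of_tendsto_of_tendsto him2 hquad
      (eventually_nhdsWithin_of_forall (fun y hy => (hy_facts y hy).2.2))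
end

section
/- Suppose λ : [0,T] → ℝ satisfies ‖λ‖_{Lip(1/2)} ≤ 1 and |λ(t₁)-λ(t₂)| ≤ M|t₁-t₂|^(1/2+δ) with 0 < δ ≤ 1/2. Then |L(s)| ≤ cMs^δ/δ for all s ∈ [0,T], where L(s) = ∫₀ˢ [1/(2u) + 2/γ(s-u,s)²] du and c > 0 is an absolute constant. -/
open Set Filter Topology MeasureTheory intervalIntegral

set_option maxHeartbeats 1000000 in
lemma key (x w m : ℝ) (hm : m^2 ≤ 1) (hc : x^2 + w^2 = 36/25) :
    (1:ℝ) ≤ (36/25 + (5/2)*w)*((x-m)^2 + (w+5/2)^2) + 4*x^2 - 4*x*m - 4*(w+5/2)*w := by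
  nlinarith [sq_nonneg (x-m), sq_nonneg (x+m), sq_nonneg (w+6/5), sq_nonneg (x*m-1), sq_nonneg (x*m+1), sq_nonneg (w*m), sq_nonneg (x+w*m), sq_nonneg (x-w*m), sq_nonneg (x*w), hm, sq_nonneg (1-m^2), mul_nonneg (sub_nonneg.2 hm) (sq_nonneg (w+6/5))]

lemma key_hom (X Y R l : ℝ) (hR : 0 < R) (hl : l^2 ≤ R^2)
    (hc : X^2 + (Y - (5/2)*R)^2 = (36/25)*R^2) :
    R^3 ≤ 4*R*X*(X-l) - 4*R*Y*(Y-(5/2)*R)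
      + ((5/2)*(Y-(5/2)*R) + (36/25)*R)*((X-l)^2+Y^2) := by
  have hR' : R ≠ 0 := hR.ne'
  have hm : (l/R)^2 ≤ 1 := by
    rw [div_pow, div_le_one (by positivity)]; exact hl
  have hc' : (X/R)^2 + ((Y-(5/2)*R)/R)^2 = 36/25 := by
    field_simp
    nlinarith [hc, sq_nonneg R]
  have h1 := key (X/R) ((Y-(5/2)*R)/R) (l/R) hm hc'
  have h2 := mul_le_mul_of_nonneg_left h1 (le_of_lt (by positivity : (0:ℝ) < R^3))
  calc R^3 = R^3 * 1 := by ring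
  _ ≤ R^3 * ((36/25 + (5/2)*((Y-(5/2)*R)/R))*((X/R-l/R)^2 + ((Y-(5/2)*R)/R+5/2)^2)
        + 4*(X/R)^2 - 4*(X/R)*(l/R) - 4*((Y-(5/2)*R)/R+5/2)*((Y-(5/2)*R)/R)) := h2
  _ = 4*R*X*(X-l) - 4*R*Y*(Y-(5/2)*R)
      + ((5/2)*(Y-(5/2)*R) + (36/25)*R)*((X-l)^2+Y^2) := by
    field_simp
    ring

set_option maxHeartbeats 2000000 in
lemma Vderiv (P : ℝ → ℂ) (u l : ℝ) (hu : 0 < u)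
    (hP : HasDerivAt P (-(2 / (P u - (l:ℂ)))) u)
    (hIm : 0 < (P u).im)
    (hl : |l| ≤ Real.sqrt u)
    (hcross : (P u).re * (P u).re
      + ((P u).im - 5/2*Real.sqrt u) * ((P u).im - 5/2*Real.sqrt u) - 36/25*u = 0) :
    ∃ d : ℝ, d < 0 ∧
      HasDerivAt (fun v => (P v).re * (P v).re
        + ((P v).im - 5/2*Real.sqrt v) * ((P v).im - 5/2*Real.sqrt v) - 36/25*v) d u := by
  have hR : 0 < Real.sqrt u := Real.sqrt_pos.2 hu
  have hw : P u - (l:ℂ) ≠ 0 := by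
    intro h0
    have h1 := congrArg Complex.im (sub_eq_zero.mp h0)
    simp at h1
    exact absurd h1 hIm.ne'
  have hXd : HasDerivAt (fun v => (P v).re) ((-(2 / (P u - (l:ℂ)))).re) u := by
    exact (Complex.reCLM.hasFDerivAt (x := P u)).comp_hasDerivAt u hP
  have hYd : HasDerivAt (fun v => (P v).im) ((-(2 / (P u - (l:ℂ)))).im) u := by
    exact (Complex.imCLM.hasFDerivAt (x := P u)).comp_hasDerivAt u hP
  have hRd : HasDerivAt Real.sqrt (1/(2*Real.sqrt u)) u := Real.hasDerivAt_sqrt hu.ne'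
  have h2 : HasDerivAt (fun v => (P v).im - 5/2*Real.sqrt v)
      ((-(2 / (P u - (l:ℂ)))).im - 5/2*(1/(2*Real.sqrt u))) u := hYd.sub (hRd.const_mul (5/2))
  have hlin : HasDerivAt (fun v : ℝ => 36/25*v) (36/25) u := by
    simpa using (hasDerivAt_id u).const_mul ((36:ℝ)/25)
  refine ⟨_, ?_, ((hXd.mul hXd).add (h2.mul h2)).sub hlin⟩
  set X := (P u).re with hX
  set Y := (P u).im with hY
  set R := Real.sqrt u with hRdef
  set D := Complex.normSq (P u - (l:ℂ)) with hDdef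
  have hDpos : 0 < D := Complex.normSq_pos.2 hw
  have hre : (-(2 / (P u - (l:ℂ)))).re = -(2*(X - l)/D) := by
    rw [Complex.neg_re, Complex.div_re]
    simp [Complex.sub_re, Complex.sub_im, Complex.ofReal_re, Complex.ofReal_im, ← hX, ← hY, ← hDdef]
  have him : (-(2 / (P u - (l:ℂ)))).im = 2*Y/D := by
    rw [Complex.neg_im, Complex.div_im]
    simp [Complex.sub_re, Complex.sub_im, Complex.ofReal_re, Complex.ofReal_im, ← hX, ← hY, ← hDdef]
  rw [hre, him]
  have hDval : D = (X - l)^2 + Y^2 := by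
    rw [hDdef, Complex.normSq_apply]
    simp [Complex.sub_re, Complex.sub_im, Complex.ofReal_re, Complex.ofReal_im, ← hX, ← hY]
    ring
  have hR2 : R^2 = u := Real.sq_sqrt hu.le
  have hl2 : l^2 ≤ R^2 := by
    have := pow_le_pow_left₀ (abs_nonneg l) hl 2
    rwa [sq_abs] at this
  have hc : X^2 + (Y - (5/2)*R)^2 = (36/25)*R^2 := by rw [hR2]; nlinarith [hcross]
  have hkey := key_hom X Y R l hR hl2 hc
  rw [← hDval] at hkey
  have hid : ((-(2*(X - l)/D))*X + X*(-(2*(X - l)/D))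
      + ((2*Y/D - 5/2*(1/(2*R)))*(Y - 5/2*R) + (Y - 5/2*R)*(2*Y/D - 5/2*(1/(2*R)))) - 36/25)
      * (R*D)
      = -(4*R*X*(X-l) - 4*R*Y*(Y-(5/2)*R) + ((5/2)*(Y-(5/2)*R) + (36/25)*R)*D) := by
    field_simp
    ring
  nlinarith [hid, hkey, mul_pos hR hDpos, pow_pos hR 3]

lemma disk_bounds (p : ℂ) (v : ℝ) (hv : 0 < v)
    (hV : p.re * p.re + (p.im - 5/2*Real.sqrt v) * (p.im - 5/2*Real.sqrt v) - 36/25*v < 0) :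
    (13/10)*Real.sqrt v < p.im ∧ ‖p‖ ≤ (37/10)*Real.sqrt v := by
  set R := Real.sqrt v with hRdef
  have hR : 0 < R := Real.sqrt_pos.2 hv
  have hR2 : R^2 = v := Real.sq_sqrt hv.le
  have h1 : (p.im - 5/2*R)^2 < ((6/5)*R)^2 := by nlinarith [sq_nonneg p.re]
  have h2 : |p.im - 5/2*R| < (6/5)*R := by
    have := lt_of_pow_lt_pow_left₀ 2 (by positivity : (0:ℝ) ≤ (6/5)*R) (by rwa [sq_abs])
    exact this
  constructor
  · have := (abs_lt.1 h2).1
    linarith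
  · have hsq : ‖p - ((5/2*R : ℝ):ℂ)*Complex.I‖^2
        = p.re*p.re + (p.im - 5/2*R)*(p.im - 5/2*R) := by
      rw [Complex.sq_norm, Complex.normSq_apply]
      simp [Complex.sub_re, Complex.sub_im]
    have h3 : ‖p - ((5/2*R : ℝ):ℂ)*Complex.I‖^2 < ((6/5)*R)^2 := by
      rw [hsq]; nlinarith [hV, hR2]
    have hlt : ‖p - ((5/2*R : ℝ):ℂ)*Complex.I‖ < (6/5)*R :=
      lt_of_pow_lt_pow_left₀ 2 (by positivity) h3
    have htri : ‖p‖ ≤ ‖p - ((5/2*R : ℝ):ℂ)*Complex.I‖ + ‖((5/2*R : ℝ):ℂ)*Complex.I‖ := by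
      have : p = (p - ((5/2*R : ℝ):ℂ)*Complex.I) + ((5/2*R : ℝ):ℂ)*Complex.I := by ring
      nth_rewrite 1 [this]
      exact norm_add_le _ _
    have hnI : ‖((5/2*R : ℝ):ℂ)*Complex.I‖ = 5/2*R := by
      rw [norm_mul, Complex.norm_I, mul_one, Complex.norm_real, Real.norm_eq_abs,
        abs_of_nonneg (by positivity)]
    linarith

lemma normPa (p : ℂ) (a e : ℝ) (ha : 0 < a) (he : 0 < e) (he2 : e ≤ 1/100)
    (hIm : 0 < p.im)
    (hPa : ‖p^2 + 4*(a:ℂ)‖ ≤ 15*e*a) :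
    p.re * p.re + (p.im - 5/2*Real.sqrt a) * (p.im - 5/2*Real.sqrt a) - 36/25*a < 0 := by
  set R := Real.sqrt a with hRdef
  have hR : 0 < R := Real.sqrt_pos.2 ha
  have hR2 : R^2 = a := Real.sq_sqrt ha.le
  have hRc : ((R:ℝ):ℂ)^2 = (a:ℂ) := by rw [← hR2]; push_cast; ring
  have hfact : (p - 2*(R:ℂ)*Complex.I)*(p + 2*(R:ℂ)*Complex.I) = p^2 + 4*(a:ℂ) := by
    have h1 : Complex.I^2 = -1 := Complex.I_sq
    linear_combination (-4*(R:ℂ)^2) * h1 + 4 * hRc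
  have hnormprod : ‖p - 2*(R:ℂ)*Complex.I‖ * ‖p + 2*(R:ℂ)*Complex.I‖ = ‖p^2 + 4*(a:ℂ)‖ := by
    rw [← norm_mul, hfact]
  have hge : 2*R ≤ ‖p + 2*(R:ℂ)*Complex.I‖ := by
    have him2 : (p + 2*(R:ℂ)*Complex.I).im = p.im + 2*R := by simp
    have h3 : |(p + 2*(R:ℂ)*Complex.I).im| ≤ ‖p + 2*(R:ℂ)*Complex.I‖ := by
      exact Complex.abs_im_le_norm _
    rw [him2] at h3
    calc 2*R ≤ p.im + 2*R := by linarith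
    _ ≤ |p.im + 2*R| := le_abs_self _
    _ ≤ _ := h3
  have hpos : 0 < ‖p + 2*(R:ℂ)*Complex.I‖ := lt_of_lt_of_le (by positivity) hge
  have hA : ‖p - 2*(R:ℂ)*Complex.I‖ ≤ 15*e*a/(2*R) := by
    rw [eq_div_of_mul_eq hpos.ne' hnormprod]
    exact div_le_div₀ (by positivity) hPa (by positivity) hge
  have haR : a / R = R := by rw [hRdef]; exact Real.div_sqrt
  have hA' : ‖p - 2*(R:ℂ)*Complex.I‖ ≤ (3/40)*R := by
    have e1 : 15*e*a/(2*R) = (15*e/2)*(a/R) := by ring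
    rw [e1, haR] at hA
    nlinarith [hR]
  have htr : ‖p - (5/2)*(R:ℂ)*Complex.I‖ ≤ ‖p - 2*(R:ℂ)*Complex.I‖ + (1/2)*R := by
    have hd : p - (5/2)*(R:ℂ)*Complex.I
        = (p - 2*(R:ℂ)*Complex.I) - (1/2)*(R:ℂ)*Complex.I := by ring
    rw [hd]
    have := norm_sub_le (p - 2*(R:ℂ)*Complex.I) ((1/2)*(R:ℂ)*Complex.I)
    have hni : ‖(1/2 : ℂ)*(R:ℂ)*Complex.I‖ = (1/2)*R := by
      rw [norm_mul, norm_mul, Complex.norm_I, mul_one, Complex.norm_real]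
      simp [abs_of_nonneg hR.le]
    rw [hni] at this
    exact this
  have hfin : ‖p - (5/2)*(R:ℂ)*Complex.I‖ ≤ (23/40)*R := by linarith
  have hsq : p.re * p.re + (p.im - 5/2*R) * (p.im - 5/2*R)
      = ‖p - (5/2)*(R:ℂ)*Complex.I‖^2 := by
    rw [Complex.sq_norm, Complex.normSq_apply]
    simp [Complex.sub_re, Complex.sub_im]
  have hsqle : ‖p - (5/2)*(R:ℂ)*Complex.I‖^2 ≤ ((23/40)*R)^2 :=
    pow_le_pow_left₀ (norm_nonneg _) hfin 2
  rw [hsq]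
  nlinarith [hR2, hR]

lemma barrier {f : ℝ → ℝ} {a b : ℝ} (hab : a ≤ b)
    (hcont : ContinuousOn f (Icc a b))
    (hfa : f a < 0)
    (hderiv : ∀ u ∈ Icc a b, f u = 0 → ∃ d : ℝ, d < 0 ∧ HasDerivAt f d u) :
    ∀ u ∈ Icc a b, f u < 0 := by
  by_contra hcon
  push_neg at hcon
  obtain ⟨u₀, hu₀, hfu₀⟩ := hcon
  set S : Set ℝ := {u | u ∈ Icc a b ∧ 0 ≤ f u} with hS
  have hSne : S.Nonempty := ⟨u₀, hu₀, hfu₀⟩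
  have hSbdd : BddBelow S := ⟨a, fun x hx => hx.1.1⟩
  have hSclosed : IsClosed S := by
    have hSeq : S = Icc a b ∩ f ⁻¹' (Ici 0) := by
      ext x; constructor
      · rintro ⟨h1, h2⟩; exact ⟨h1, h2⟩
      · rintro ⟨h1, h2⟩; exact ⟨h1, h2⟩
    rw [hSeq]
    exact hcont.preimage_isClosed_of_isClosed isClosed_Icc isClosed_Ici
  set c := sInf S with hc
  have hcS : c ∈ S := hSclosed.csInf_mem hSne hSbdd
  have hca : a < c := by
    rcases lt_or_eq_of_le hcS.1.1 with h | h
    · exact h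
    · exact absurd hfa (by rw [h]; exact not_lt.2 hcS.2)
  have hlt : ∀ v ∈ Ico a c, f v < 0 := by
    intro v hv
    by_contra hge
    push_neg at hge
    have hvS : v ∈ S := ⟨⟨hv.1, hv.2.le.trans hcS.1.2⟩, hge⟩
    exact absurd (csInf_le hSbdd hvS) (not_le.2 hv.2)
  have hne : (𝓝[Ioo a c] c).NeBot := right_nhdsWithin_Ioo_neBot hca
  have hsub : Ioo a c ⊆ Icc a b := fun x hx => ⟨hx.1.le, hx.2.le.trans hcS.1.2⟩
  have hfc0 : f c = 0 := by
    refine le_antisymm ?_ hcS.2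
    have htend : Tendsto f (𝓝[Ioo a c] c) (𝓝 (f c)) :=
      ((hcont.continuousWithinAt hcS.1).mono hsub).tendsto
    exact le_of_tendsto htend (eventually_nhdsWithin_of_forall
      (fun v hv => (hlt v ⟨hv.1.le, hv.2⟩).le))
  obtain ⟨d, hdneg, hd⟩ := hderiv c hcS.1 hfc0
  have hslope := hasDerivAt_iff_tendsto_slope.1 hd
  have hmono : 𝓝[Ioo a c] c ≤ 𝓝[≠] c :=
    nhdsWithin_mono c (fun x hx => ne_of_lt hx.2)
  have h1 : ∀ᶠ v in 𝓝[Ioo a c] c, slope f c v < d/2 :=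
    (hslope.mono_left hmono).eventually (Filter.Tendsto.eventually_lt_const (by linarith) tendsto_id)
      |>.mono (fun x h => h)
  have h2 : ∀ᶠ v in 𝓝[Ioo a c] c, 0 < slope f c v :=
    eventually_nhdsWithin_of_forall (fun v hv => by
      have hfv : f v < 0 := hlt v ⟨hv.1.le, hv.2⟩
      rw [slope_comm, slope_def_field]
      have hnum : f c - f v > 0 := by rw [hfc0]; linarith
      have hden : c - v > 0 := by linarith [hv.2]
      positivity)
  have := (h1.and h2).exists
  obtain ⟨v, hv1, hv2⟩ := this
  linarith

lemma not_integrable_of_big {F : ℝ → ℂ} {u₀ ε : ℝ} (hu₀ : 0 < u₀) (hε : 0 < ε)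
    (h : ∀ a ∈ Ioo 0 u₀, ε/a ≤ ‖F a‖) : ¬ IntervalIntegrable F volume 0 u₀ := by
  intro hint
  have hnorm : IntervalIntegrable (fun a => ‖F a‖) volume 0 u₀ := hint.norm
  set u₁ := u₀/2 with hu₁
  have hu₁pos : 0 < u₁ := by positivity
  have hu₁lt : u₁ < u₀ := by simp [hu₁]; linarith
  set B := ∫ a in (0:ℝ)..u₀, ‖F a‖ with hB
  have hkey : ∀ t ∈ Ioo (0:ℝ) u₁, ε * Real.log (u₁/t) ≤ B := by
    intro t ht
    have htu₁ : t ≤ u₁ := ht.2.le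
    have hsub1 : uIcc t u₁ ⊆ uIcc (0:ℝ) u₀ := by
      rw [uIcc_of_le htu₁, uIcc_of_le hu₀.le]
      exact Icc_subset_Icc ht.1.le hu₁lt.le
    have hFi : IntervalIntegrable (fun a => ‖F a‖) volume t u₁ := hnorm.mono_set hsub1
    have hgi : IntervalIntegrable (fun a => ε/a) volume t u₁ := by
      apply ContinuousOn.intervalIntegrable
      apply ContinuousOn.div continuousOn_const continuousOn_id
      intro x hx
      rw [uIcc_of_le htu₁] at hx
      exact ne_of_gt (lt_of_lt_of_le ht.1 hx.1)
    have hmono : ∫ a in t..u₁, ε/a ≤ ∫ a in t..u₁, ‖F a‖ := by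
      apply integral_mono_on htu₁ hgi hFi
      intro x hx
      exact h x ⟨lt_of_lt_of_le ht.1 hx.1, lt_of_le_of_lt hx.2 hu₁lt⟩
    have hcomp : ∫ a in t..u₁, ε/a = ε * Real.log (u₁/t) := by
      have h0 : (0:ℝ) ∉ uIcc t u₁ := by
        rw [uIcc_of_le htu₁]
        rintro ⟨h1, -⟩
        exact absurd ht.1 (not_lt.2 h1)
      rw [show (fun a => ε/a) = (fun a => ε * (1/a)) from by funext a; ring]
      rw [intervalIntegral.integral_const_mul, integral_one_div h0]
    have hsplit : ∫ a in t..u₁, ‖F a‖ ≤ B := by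
      have h1 : IntervalIntegrable (fun a => ‖F a‖) volume 0 t := by
        apply hnorm.mono_set
        rw [uIcc_of_le ht.1.le, uIcc_of_le hu₀.le]
        exact Icc_subset_Icc le_rfl (by linarith)
      have h2 : IntervalIntegrable (fun a => ‖F a‖) volume u₁ u₀ := by
        apply hnorm.mono_set
        rw [uIcc_of_le hu₁lt.le, uIcc_of_le hu₀.le]
        exact Icc_subset_Icc hu₁pos.le le_rfl
      have e1 : ∫ a in (0:ℝ)..t, ‖F a‖ ≥ 0 :=
        intervalIntegral.integral_nonneg ht.1.le (fun x _ => norm_nonneg _)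
      have e2 : ∫ a in u₁..u₀, ‖F a‖ ≥ 0 :=
        intervalIntegral.integral_nonneg hu₁lt.le (fun x _ => norm_nonneg _)
      have A1 := intervalIntegral.integral_add_adjacent_intervals h1 hFi
      have A2 := intervalIntegral.integral_add_adjacent_intervals (h1.trans hFi) h2
      linarith
    linarith
  -- choose t small
  set t := u₁ * Real.exp (-(B+1)/ε) with ht
  have hBnn : 0 ≤ B := intervalIntegral.integral_nonneg hu₀.le (fun x _ => norm_nonneg _)
  have htpos : 0 < t := by positivity
  have htlt : t < u₁ := by
    rw [ht]
    nth_rewrite 2 [show u₁ = u₁ * 1 from (mul_one u₁).symm]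
    apply mul_lt_mul_of_pos_left _ hu₁pos
    rw [Real.exp_lt_one_iff]
    exact div_neg_of_neg_of_pos (by linarith) hε
  have := hkey t ⟨htpos, htlt⟩
  rw [ht] at this
  rw [show u₁ / (u₁ * Real.exp (-(B+1)/ε)) = (Real.exp (-(B+1)/ε))⁻¹ from by
    field_simp] at this
  rw [← Real.exp_neg, Real.log_exp] at this
  have h3 : ε * ((B+1)/ε) ≤ B := by
    rw [show -(-(B+1)/ε) = (B+1)/ε from by ring] at this
    exact this
  rw [mul_div_cancel₀ _ hε.ne'] at h3
  linarith

set_option maxHeartbeats 4000000 in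
open intervalIntegral in
/-- For a Lip(1/2+δ) driver with `‖λ‖_{Lip(1/2)} ≤ 1`:
`|L(s)| ≤ cMs^δ/δ` with an absolute constant `c`, where
`L(s) = ∫₀ˢ [1/(2u) + 2/γ(s-u,s)²] du` and `γ(s-u,s) = g_{s-u}(γ(s)) - λ(s-u)`. -/
theorem stmt_14 :
    ∃ c : ℝ, 0 < c ∧
      ∀ (M T δ : ℝ) (lam : ℝ → ℝ) (γ : ℝ → ℂ) (g g' f : ℝ → ℂ → ℂ),
        0 < M → 0 < δ → δ ≤ 1/2 →
        LoewnerData T lam γ g g' f →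
        (∀ t₁ ∈ Icc (0:ℝ) T, ∀ t₂ ∈ Icc (0:ℝ) T,
          |lam t₁ - lam t₂| ≤ |t₁ - t₂| ^ ((1:ℝ)/2)) →
        (∀ t₁ ∈ Icc (0:ℝ) T, ∀ t₂ ∈ Icc (0:ℝ) T,
          |lam t₁ - lam t₂| ≤ M * |t₁ - t₂| ^ ((1:ℝ)/2 + δ)) →
        ∀ s ∈ Icc (0:ℝ) T,
          ‖∫ u in (0:ℝ)..s,
              (1 / (2 * (u:ℂ)) + 2 / (g (s - u) (γ s) - (lam (s - u) : ℂ)) ^ 2)‖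
            ≤ c * M * s ^ δ / δ := by
  refine ⟨4, by norm_num, ?_⟩
  intro M T δ lam γ g g' f hM hδ hδ2 LD hyp1 hyp2 s hs
  obtain ⟨hs0', hsT⟩ := hs
  have hRHS : 0 ≤ 4 * M * s ^ δ / δ := by positivity
  rcases eq_or_lt_of_le hs0' with h0 | hs0
  · rw [← h0]
    simp [intervalIntegral.integral_same, Real.zero_rpow hδ.ne']
  set F : ℝ → ℂ :=
    fun u => 1 / (2 * (u:ℂ)) + 2 / (g (s - u) (γ s) - (lam (s - u) : ℂ)) ^ 2 with hF
  by_cases hInt : IntervalIntegrable F volume 0 s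
  swap
  · rw [intervalIntegral.integral_undef hInt, norm_zero]
    exact hRHS
  set H : ℝ → ℂ := fun u => g (s - u) (γ s) - (lam (s - u) : ℂ) with hHdef
  set P : ℝ → ℂ := fun u => g (s - u) (γ s) - (lam s : ℂ) with hPdef
  set dl : ℝ → ℝ := fun u => lam (s - u) - lam s with hdldef
  have hHP : ∀ u, H u = P u - ((dl u : ℝ):ℂ) := by
    intro u; simp only [hHdef, hPdef, hdldef]; push_cast; ring
  have hmem : ∀ u ∈ Ioo 0 s, (s - u ∈ Icc 0 T) ∧
      γ s ∈ {w : ℂ | 0 < w.im} \ γ '' Icc 0 (s - u) := by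
    intro u hu
    refine ⟨⟨by linarith [hu.2], by linarith [hu.1]⟩, LD.slit_im_pos s hs0 hsT, ?_⟩
    rintro ⟨v, hv, hveq⟩
    have hvT : v ∈ Icc 0 T := ⟨hv.1, hv.2.trans (by linarith [hu.1])⟩
    have hvs := LD.slit_inj hvT ⟨hs0.le, hsT⟩ hveq
    rw [hvs] at hv
    linarith [hv.2, hu.1]
  have hsderiv : ∀ u ∈ Ioo 0 s, HasDerivAt P (-(2 / H u)) u := by
    intro u hu
    obtain ⟨ht, hz⟩ := hmem u hu
    have hode := LD.flow_ode (s - u) ht (γ s) hz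
    have hcomp := HasDerivAt.comp_const_sub s u hode
    have hc2 : HasDerivAt (fun w : ℝ => g (s - w) (γ s)) (-(2 / H u)) u := by
      simpa [hHdef] using hcomp
    have := hc2.sub_const ((lam s : ℝ):ℂ)
    rw [hPdef]
    exact this
  have himP : ∀ u ∈ Ioo 0 s, 0 < (P u).im := by
    intro u hu
    obtain ⟨ht, hz⟩ := hmem u hu
    have hb := (LD.flow_bij (s - u) ht).mapsTo hz
    simp only [hPdef, Complex.sub_im, Complex.ofReal_im, sub_zero]
    exact hb
  have hImHP : ∀ u, (H u).im = (P u).im := by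
    intro u; simp [hHdef, hPdef]
  have hH0 : ∀ u ∈ Ioo 0 s, H u ≠ 0 := by
    intro u hu h0
    have h2 := himP u hu
    rw [← hImHP u, h0] at h2
    simp at h2
  have hdl1 : ∀ u ∈ Icc 0 s, |dl u| ≤ Real.sqrt u := by
    intro u hu
    have := hyp1 (s - u) ⟨by linarith [hu.2], by linarith [hu.1]⟩ s ⟨hs0.le, hsT⟩
    rw [show s - u - s = -u by ring, abs_neg, abs_of_nonneg hu.1] at this
    rwa [Real.sqrt_eq_rpow]
  have hdl2 : ∀ u ∈ Ioo 0 s, |dl u| ≤ M * Real.sqrt u * u ^ δ := by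
    intro u hu
    have h := hyp2 (s - u) ⟨by linarith [hu.2], by linarith [hu.1]⟩ s ⟨hs0.le, hsT⟩
    rw [show s - u - s = -u by ring, abs_neg, abs_of_nonneg hu.1.le] at h
    rwa [Real.rpow_add hu.1, ← Real.sqrt_eq_rpow, ← mul_assoc] at h
  have hdlc : ContinuousOn dl (Icc 0 s) := by
    rw [hdldef]
    apply ContinuousOn.sub _ continuousOn_const
    apply LD.lam_cont.comp (Continuous.continuousOn (by continuity))
    intro x hx
    exact ⟨by linarith [hx.2], by linarith [hx.1]⟩
  have hFnorm : ∀ u ∈ Ioo 0 s, ‖F u‖ = ‖H u ^ 2 + 4 * (u:ℂ)‖ / (2 * u * ‖H u‖^2) := by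
    intro u hu
    have hu0 : (u:ℂ) ≠ 0 := by exact_mod_cast hu.1.ne'
    have hHne := hH0 u hu
    have hid : F u = (H u ^ 2 + 4 * (u:ℂ)) / (2 * (u:ℂ) * H u ^ 2) := by
      rw [hF]
      simp only [hHdef] at hHne ⊢
      field_simp
      ring
    rw [hid, norm_div, norm_mul, norm_mul, norm_pow]
    simp only [Complex.norm_real, Real.norm_eq_abs]
    rw [abs_of_pos hu.1]
    norm_num
  have hanch : ∀ ε u₀ : ℝ, 0 < ε → 0 < u₀ → u₀ ≤ s → ∃ a ∈ Ioo 0 u₀, ‖F a‖ < ε / a := by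
    intro ε u₀ hε hu₀ hu₀s
    by_contra hcon
    push_neg at hcon
    refine not_integrable_of_big hu₀ hε hcon (hInt.mono_set ?_)
    rw [uIcc_of_le hu₀.le, uIcc_of_le hs0.le]
    exact Icc_subset_Icc le_rfl hu₀s
  have hpt : ∀ u ∈ Ioo 0 s, ‖F u‖ ≤ 4 * M * u ^ (δ - 1) := by
    intro u hu
    have hu0 : 0 < u := hu.1
    have hmain : ∀ ε' : ℝ, 0 < ε' → ‖F u‖ ≤ 600/169 * M * u ^ (δ - 1) + ε' := by
      intro ε' hε'
      set ε : ℝ := min (1/100) (ε' * u * (169/750)) with hεdef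
      have hεpos : 0 < ε := lt_min (by norm_num) (by positivity)
      have hε100 : ε ≤ 1/100 := min_le_left _ _
      set u₀ : ℝ := min u ((ε/M) ^ (δ⁻¹)) with hu₀def
      have hu₀pos : 0 < u₀ := lt_min hu0 (Real.rpow_pos_of_pos (by positivity) _)
      have hu₀s : u₀ ≤ s := le_trans (min_le_left _ _) hu.2.le
      obtain ⟨a, ha, hFa⟩ := hanch ε u₀ hεpos hu₀pos hu₀s
      have ha0 : 0 < a := ha.1
      have hau : a < u := lt_of_lt_of_le ha.2 (min_le_left _ _)
      have haIoo : a ∈ Ioo 0 s := ⟨ha0, hau.trans hu.2⟩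
      have hsubIoo : Icc a u ⊆ Ioo 0 s :=
        fun v hv => ⟨lt_of_lt_of_le ha0 hv.1, lt_of_le_of_lt hv.2 hu.2⟩
      have hsubIcc : Icc a u ⊆ Icc 0 s :=
        fun v hv => ⟨le_trans ha0.le hv.1, le_trans hv.2 hu.2.le⟩
      have hMa : M * a ^ δ ≤ ε := by
        have h1 : a ≤ (ε/M) ^ (δ⁻¹) := le_trans ha.2.le (min_le_right _ _)
        have h2 : a ^ δ ≤ ((ε/M) ^ (δ⁻¹)) ^ δ := Real.rpow_le_rpow ha0.le h1 hδ.le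
        rw [← Real.rpow_mul (by positivity : (0:ℝ) ≤ ε/M), inv_mul_cancel₀ hδ.ne',
          Real.rpow_one] at h2
        calc M * a ^ δ ≤ M * (ε / M) := by nlinarith [h2, hM]
        _ = ε := by field_simp
      have hHa := hH0 a haIoo
      have hFa' : ‖H a ^ 2 + 4 * (a:ℂ)‖ < 2 * ε * ‖H a‖^2 := by
        have heq := hFnorm a haIoo
        rw [heq] at hFa
        have hHapos : 0 < ‖H a‖ := norm_pos_iff.2 hHa
        have hden : 0 < 2 * a * ‖H a‖^2 := by positivity
        rw [div_lt_div_iff₀ hden ha0] at hFa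
        nlinarith [hFa, ha0]
      have hA2 : ‖H a‖^2 ≤ 5 * a := by
        have h1 : ‖H a‖^2 = ‖H a ^ 2‖ := (norm_pow _ 2).symm
        have h2 : ‖H a ^ 2‖ ≤ ‖H a ^ 2 + 4 * (a:ℂ)‖ + ‖(4 * (a:ℂ))‖ := by
          have h3 := norm_sub_le (H a ^ 2 + 4 * (a:ℂ)) (4 * (a:ℂ))
          simpa using h3
        have h4a : ‖(4 * (a:ℂ))‖ = 4 * a := by
          rw [norm_mul, Complex.norm_real, Real.norm_eq_abs, abs_of_pos ha0]
          norm_num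
        rw [h4a] at h2
        have hprod : ε * ‖H a‖^2 ≤ (1/100) * ‖H a‖^2 :=
          mul_le_mul_of_nonneg_right hε100 (by positivity)
        linarith [hFa', h1, h2, hprod]
      have hB : ‖H a ^ 2 + 4 * (a:ℂ)‖ ≤ 10 * ε * a := by
        have hprod : 2 * ε * ‖H a‖^2 ≤ 2 * ε * (5*a) :=
          mul_le_mul_of_nonneg_left hA2 (by positivity)
        linarith [hFa', hprod]
      have hdla : |dl a| ≤ ε * Real.sqrt a := by
        have h5 := hdl2 a haIoo
        calc |dl a| ≤ M * Real.sqrt a * a ^ δ := h5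
        _ = (M * a ^ δ) * Real.sqrt a := by ring
        _ ≤ ε * Real.sqrt a := mul_le_mul_of_nonneg_right hMa (Real.sqrt_nonneg a)
      have hsa : Real.sqrt a * Real.sqrt a = a := Real.mul_self_sqrt ha0.le
      have hAle : ‖H a‖ ≤ Real.sqrt 5 * Real.sqrt a := by
        have h5 : Real.sqrt (5*a) = Real.sqrt 5 * Real.sqrt a := Real.sqrt_mul (by norm_num) a
        have h6 := Real.sqrt_le_sqrt hA2
        rwa [Real.sqrt_sq (norm_nonneg _), h5] at h6
      have h5le : Real.sqrt 5 ≤ 9/4 := by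
        have h7 := Real.sqrt_le_sqrt (show (5:ℝ) ≤ (9/4)^2 by norm_num)
        rwa [Real.sqrt_sq (by norm_num : (0:ℝ) ≤ 9/4)] at h7
      have hPH : P a = H a + ((dl a : ℝ):ℂ) := by rw [hHP a]; ring
      have hPa2 : ‖(P a)^2 + 4 * (a:ℂ)‖ ≤ 15 * ε * a := by
        have hexp : (P a)^2 + 4*(a:ℂ)
            = (H a ^ 2 + 4*(a:ℂ)) + (2 * H a * ((dl a : ℝ):ℂ) + ((dl a : ℝ):ℂ)^2) := by
          rw [hPH]; ring
        rw [hexp]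
        have e1 : ‖2 * H a * ((dl a:ℝ):ℂ)‖ = 2 * ‖H a‖ * |dl a| := by
          rw [norm_mul, norm_mul, Complex.norm_real, Real.norm_eq_abs]
          norm_num
        have e2 : ‖((dl a:ℝ):ℂ)^2‖ = |dl a|^2 := by
          rw [norm_pow, Complex.norm_real, Real.norm_eq_abs]
        have habs : (0:ℝ) ≤ |dl a| := abs_nonneg _
        have hm1 : ‖H a‖ * |dl a| ≤ (Real.sqrt 5 * Real.sqrt a) * (ε * Real.sqrt a) :=
          mul_le_mul hAle hdla habs (by positivity)
        have hm1' : (Real.sqrt 5 * Real.sqrt a) * (ε * Real.sqrt a) = Real.sqrt 5 * ε * a := by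
          calc (Real.sqrt 5 * Real.sqrt a) * (ε * Real.sqrt a)
              = Real.sqrt 5 * ε * (Real.sqrt a * Real.sqrt a) := by ring
          _ = Real.sqrt 5 * ε * a := by rw [hsa]
        have hm2 : |dl a|^2 ≤ (ε * Real.sqrt a)^2 := pow_le_pow_left₀ habs hdla 2
        have hm2' : (ε * Real.sqrt a)^2 = ε^2 * a := by
          calc (ε * Real.sqrt a)^2 = ε^2 * (Real.sqrt a * Real.sqrt a) := by ring
          _ = ε^2 * a := by rw [hsa]
        have hm3 : Real.sqrt 5 * ε * a ≤ (9/4) * (ε * a) := by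
          have := mul_le_mul_of_nonneg_right h5le (by positivity : (0:ℝ) ≤ ε * a)
          nlinarith [this]
        have hm4 : ε^2 * a ≤ (1/100) * (ε * a) := by nlinarith [hε100, hεpos, ha0]
        calc ‖(H a ^ 2 + 4*(a:ℂ)) + (2 * H a * ((dl a:ℝ):ℂ) + ((dl a:ℝ):ℂ)^2)‖
            ≤ ‖H a ^ 2 + 4*(a:ℂ)‖ + ‖2 * H a * ((dl a:ℝ):ℂ) + ((dl a:ℝ):ℂ)^2‖ :=
              norm_add_le _ _
        _ ≤ ‖H a ^ 2 + 4*(a:ℂ)‖ + (‖2 * H a * ((dl a:ℝ):ℂ)‖ + ‖((dl a:ℝ):ℂ)^2‖) := by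
              linarith [norm_add_le (2 * H a * ((dl a:ℝ):ℂ)) (((dl a:ℝ):ℂ)^2)]
        _ ≤ 15 * ε * a := by
              rw [e1, e2]
              linarith [hB, hm1, hm1', hm2, hm2', hm3, hm4,
                mul_nonneg hεpos.le ha0.le]
      have hVa := normPa (P a) a ε ha0 hεpos hε100 (himP a haIoo) hPa2
      have hVlt : ∀ v ∈ Icc a u, (P v).re * (P v).re
          + ((P v).im - 5/2*Real.sqrt v) * ((P v).im - 5/2*Real.sqrt v) - 36/25*v < 0 := by
        apply barrier hau.le ?_ hVa ?_
        · have hPc : ContinuousOn P (Icc a u) := fun v hv =>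
            ((hsderiv v (hsubIoo hv)).continuousAt).continuousWithinAt
          have h1 : ContinuousOn (fun v => (P v).re) (Icc a u) :=
            Complex.continuous_re.comp_continuousOn hPc
          have h2 : ContinuousOn (fun v => (P v).im) (Icc a u) :=
            Complex.continuous_im.comp_continuousOn hPc
          have h3 : ContinuousOn (fun v : ℝ => 5/2*Real.sqrt v) (Icc a u) :=
            (continuous_const.mul Real.continuous_sqrt).continuousOn
          have h4 : ContinuousOn (fun v : ℝ => 36/25*v) (Icc a u) :=
            (continuous_const.mul continuous_id).continuousOn
          exact ((h1.mul h1).add ((h2.sub h3).mul (h2.sub h3))).sub h4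
        · intro w hw hVw
          have hwIoo := hsubIoo hw
          have hPd := hsderiv w hwIoo
          rw [hHP w] at hPd
          exact Vderiv P w (dl w) hwIoo.1 hPd (himP w hwIoo)
            (hdl1 w (hsubIcc hw)) hVw
      have hlowP : ∀ v ∈ Icc a u,
          (13/10)*Real.sqrt v < (P v).im ∧ ‖P v‖ ≤ (37/10)*Real.sqrt v :=
        fun v hv => disk_bounds (P v) v (lt_of_lt_of_le ha0 hv.1) (hVlt v hv)
      have hHlow : ∀ v ∈ Icc a u, (13/10)*Real.sqrt v ≤ ‖H v‖ := by
        intro v hv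
        have h1 := (hlowP v hv).1
        have h3 : |(H v).im| ≤ ‖H v‖ := by
          exact Complex.abs_im_le_norm _
        rw [hImHP v] at h3
        calc (13/10)*Real.sqrt v ≤ (P v).im := h1.le
        _ ≤ |(P v).im| := le_abs_self _
        _ ≤ ‖H v‖ := h3
      -- FTC step
      have hPc : ContinuousOn P (Icc a u) := fun v hv =>
        ((hsderiv v (hsubIoo hv)).continuousAt).continuousWithinAt
      have hEd : ∀ v ∈ uIcc a u, HasDerivAt (fun w : ℝ => P w * P w + 4*(w:ℂ))
          (-(2 / H v) * P v + P v * (-(2 / H v)) + 4) v := by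
        intro v hv
        rw [uIcc_of_le hau.le] at hv
        have hPd := hsderiv v (hsubIoo hv)
        have h4 : HasDerivAt (fun w : ℝ => 4*(w:ℂ)) 4 v := by
          have hof := Complex.ofRealCLM.hasDerivAt (x := v)
          have h5 := hof.const_mul (4:ℂ)
          simpa using h5
        exact (hPd.mul hPd).add h4
      have hHcont : ContinuousOn H (Icc a u) := by
        rw [show H = fun v => P v - ((dl v : ℝ):ℂ) from funext hHP]
        exact hPc.sub (Complex.continuous_ofReal.comp_continuousOn (hdlc.mono hsubIcc))
      have hE'cont : ContinuousOn
          (fun v => -(2 / H v) * P v + P v * (-(2 / H v)) + 4) (uIcc a u) := by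
        rw [uIcc_of_le hau.le]
        have hdiv : ContinuousOn (fun v => -(2 / H v)) (Icc a u) := by
          apply ContinuousOn.neg
          exact ContinuousOn.div continuousOn_const hHcont
            (fun v hv => hH0 v (hsubIoo hv))
        exact ((hdiv.mul hPc).add (hPc.mul hdiv)).add continuousOn_const
      have hIntE' : IntervalIntegrable
          (fun v => -(2 / H v) * P v + P v * (-(2 / H v)) + 4) volume a u :=
        hE'cont.intervalIntegrable
      have hFTC := intervalIntegral.integral_eq_sub_of_hasDerivAt hEd hIntE'
      have hbound_ae : ∀ᵐ v ∂(volume.restrict (Set.uIoc a u)),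
          ‖-(2 / H v) * P v + P v * (-(2 / H v)) + 4‖ ≤ (40/13)*M*v^δ := by
        filter_upwards [MeasureTheory.ae_restrict_mem measurableSet_uIoc] with v hv
        rw [Set.uIoc_of_le hau.le] at hv
        have hvIcc : v ∈ Icc a u := ⟨hv.1.le, hv.2⟩
        have hvIoo := hsubIoo hvIcc
        have hv0 : 0 < v := hvIoo.1
        have hHv := hH0 v hvIoo
        have hEv : -(2 / H v) * P v + P v * (-(2 / H v)) + 4
            = -4*((dl v : ℝ):ℂ)/H v := by
          have hPv : P v = H v + ((dl v : ℝ):ℂ) := by rw [hHP v]; ring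
          rw [hPv]
          field_simp
          ring
        rw [hEv]
        have hnv : ‖-4*((dl v:ℝ):ℂ)/H v‖ = 4*|dl v|/‖H v‖ := by
          rw [norm_div, norm_mul, Complex.norm_real, Real.norm_eq_abs]
          norm_num
        rw [hnv]
        have hden := hHlow v hvIcc
        have hsv : 0 < Real.sqrt v := Real.sqrt_pos.2 hv0
        have hnum : 4*|dl v| ≤ 4*(M*Real.sqrt v*v^δ) := by linarith [hdl2 v hvIoo]
        calc 4*|dl v|/‖H v‖ ≤ 4*(M*Real.sqrt v*v^δ)/((13/10)*Real.sqrt v) :=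
              div_le_div₀ (by positivity) hnum (by positivity) hden
        _ = (40/13)*M*v^δ := by field_simp; ring
      have hgi2 : IntervalIntegrable (fun v : ℝ => (40/13)*M*v^δ) volume a u := by
        apply ContinuousOn.intervalIntegrable
        apply ContinuousOn.mul continuousOn_const
        intro v hv
        exact (Real.continuousAt_rpow_const v δ (Or.inr hδ.le)).continuousWithinAt
      have hnormE := intervalIntegral.norm_integral_le_of_norm_le hau.le
        ((MeasureTheory.ae_restrict_iff' measurableSet_Ioc).1 (by rwa [Set.uIoc_of_le hau.le] at hbound_ae)) hgi2
      rw [hFTC] at hnormE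
      have hival : ∫ v in a..u, (40/13)*M*v^δ ≤ (40/13)*M*u^(1+δ) := by
        rw [intervalIntegral.integral_const_mul]
        rw [integral_rpow (Or.inl (by linarith : (-1:ℝ) < δ))]
        have h1 : (u^(δ+1) - a^(δ+1))/(δ+1) ≤ u^(δ+1) := by
          have hnn : (0:ℝ) ≤ a^(δ+1) := Real.rpow_nonneg ha0.le _
          have hun : (0:ℝ) ≤ u^(δ+1) := Real.rpow_nonneg hu0.le _
          rw [div_le_iff₀ (by linarith)]
          nlinarith
        rw [show (1:ℝ)+δ = δ+1 from add_comm 1 δ]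
        exact mul_le_mul_of_nonneg_left h1 (by positivity : (0:ℝ) ≤ (40/13)*M)
      have habs2 : |∫ v in a..u, (40/13)*M*v^δ| = ∫ v in a..u, (40/13)*M*v^δ := by
        apply abs_of_nonneg
        apply intervalIntegral.integral_nonneg hau.le
        intro v hv
        have hv0 : (0:ℝ) ≤ v := le_trans ha0.le hv.1
        have : (0:ℝ) ≤ v^δ := Real.rpow_nonneg hv0 _
        positivity
      have hEu : ‖P u * P u + 4*(u:ℂ)‖ ≤ 15*ε*u + (40/13)*M*u^(1+δ) := by
        have h0' : ‖P u * P u + 4*(u:ℂ)‖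
            ≤ ‖(P u * P u + 4*(u:ℂ)) - (P a * P a + 4*(a:ℂ))‖
              + ‖P a * P a + 4*(a:ℂ)‖ := by
          have h6 := norm_add_le ((P u * P u + 4*(u:ℂ)) - (P a * P a + 4*(a:ℂ)))
            (P a * P a + 4*(a:ℂ))
          simpa using h6
        have hPa2' : ‖P a * P a + 4*(a:ℂ)‖ ≤ 15*ε*a := by
          rw [show P a * P a = (P a)^2 from (sq (P a)).symm]
          exact hPa2
        have h15 : (15:ℝ)*ε*a ≤ 15*ε*u := by nlinarith [hau.le, hεpos]
        linarith [hnormE, hival]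
      have hHuIcc : u ∈ Icc a u := ⟨hau.le, le_rfl⟩
      have hHu := hHlow u hHuIcc
      have hPub := (hlowP u hHuIcc).2
      have hsu : 0 < Real.sqrt u := Real.sqrt_pos.2 hu0
      have hsu2 : Real.sqrt u * Real.sqrt u = u := Real.mul_self_sqrt hu0.le
      have hu1δ : u^(1+δ) = u * u^δ := by rw [Real.rpow_add hu0, Real.rpow_one]
      have hHu2c : ‖H u^2 + 4*(u:ℂ)‖ ≤ 15*ε*u + 12*M*u^(1+δ) := by
        have hHu2 : H u^2 + 4*(u:ℂ) = (P u * P u + 4*(u:ℂ))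
            + (-(2 * P u * ((dl u:ℝ):ℂ)) + ((dl u:ℝ):ℂ)^2) := by
          rw [hHP u]; ring
        rw [hHu2]
        have e1 : ‖2 * P u * ((dl u:ℝ):ℂ)‖ = 2 * ‖P u‖ * |dl u| := by
          rw [norm_mul, norm_mul, Complex.norm_real, Real.norm_eq_abs]
          norm_num
        have e2 : ‖((dl u:ℝ):ℂ)^2‖ = |dl u|^2 := by
          rw [norm_pow, Complex.norm_real, Real.norm_eq_abs]
        have hdlu2 := hdl2 u hu
        have hdlu1 := hdl1 u ⟨hu0.le, hu.2.le⟩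
        have hm1 : ‖P u‖ * |dl u| ≤ ((37/10)*Real.sqrt u) * (M*Real.sqrt u*u^δ) :=
          mul_le_mul hPub hdlu2 (abs_nonneg _) (by positivity)
        have hm1' : ((37/10)*Real.sqrt u) * (M*Real.sqrt u*u^δ) = (37/10)*M*u^(1+δ) := by
          rw [hu1δ]
          calc ((37/10)*Real.sqrt u) * (M*Real.sqrt u*u^δ)
              = (37/10)*M*((Real.sqrt u * Real.sqrt u)*u^δ) := by ring
          _ = (37/10)*M*(u*u^δ) := by rw [hsu2]
        have hm2 : |dl u|^2 ≤ Real.sqrt u * (M*Real.sqrt u*u^δ) := by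
          calc |dl u|^2 = |dl u| * |dl u| := sq (|dl u|)
          _ ≤ Real.sqrt u * (M*Real.sqrt u*u^δ) :=
              mul_le_mul hdlu1 hdlu2 (abs_nonneg _) (Real.sqrt_nonneg u)
        have hm2' : Real.sqrt u * (M*Real.sqrt u*u^δ) = M*u^(1+δ) := by
          rw [hu1δ]
          calc Real.sqrt u * (M*Real.sqrt u*u^δ)
              = M*((Real.sqrt u * Real.sqrt u)*u^δ) := by ring
          _ = M*(u*u^δ) := by rw [hsu2]
        calc ‖(P u * P u + 4*(u:ℂ)) + (-(2 * P u * ((dl u:ℝ):ℂ)) + ((dl u:ℝ):ℂ)^2)‖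
            ≤ ‖P u * P u + 4*(u:ℂ)‖
              + (‖2 * P u * ((dl u:ℝ):ℂ)‖ + ‖((dl u:ℝ):ℂ)^2‖) := by
              have t1 := norm_add_le (P u * P u + 4*(u:ℂ))
                (-(2 * P u * ((dl u:ℝ):ℂ)) + ((dl u:ℝ):ℂ)^2)
              have t2 := norm_add_le (-(2 * P u * ((dl u:ℝ):ℂ))) (((dl u:ℝ):ℂ)^2)
              rw [norm_neg] at t2
              linarith
        _ ≤ 15*ε*u + 12*M*u^(1+δ) := by
              rw [e1, e2]
              linarith [hEu, hm1, hm1', hm2, hm2',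
                mul_nonneg hM.le (Real.rpow_nonneg hu0.le (1+δ))]
      have hFu := hFnorm u hu
      have hHunorm2 : (169/100)*u ≤ ‖H u‖^2 := by
        nlinarith [hHu, hsu2, hsu, norm_nonneg (H u)]
      rw [hFu]
      have hupow : u^(1+δ) = u^(δ-1) * u^2 := by
        rw [← Real.rpow_natCast u 2, ← Real.rpow_add hu0]
        norm_num
        rw [show δ - 1 + 2 = 1 + δ by ring]
      have hε2 : ε ≤ ε' * u * (169/750) := min_le_right _ _
      calc ‖H u^2 + 4*(u:ℂ)‖/(2*u*‖H u‖^2)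
          ≤ (15*ε*u + 12*M*u^(1+δ))/(2*u*((169/100)*u)) := by
            apply div_le_div₀ (by positivity) hHu2c (by positivity)
            nlinarith [hHunorm2, hu0]
      _ ≤ 600/169 * M * u^(δ-1) + ε' := by
            rw [div_le_iff₀ (by positivity : (0:ℝ) < 2*u*((169/100)*u))]
            have hAq : (600/169 * M * u^(δ-1) + ε') * (2*u*((169/100)*u))
                = 12*M*(u^(δ-1)*u^2) + (169/50)*ε'*(u*u) := by ring
            rw [hAq, ← hupow]
            have hC : 15*ε*u ≤ (169/50)*ε'*(u*u) := by
              have h9 := mul_le_mul_of_nonneg_right hε2 hu0.le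
              nlinarith [h9]
            linarith
    have hle0 : ‖F u‖ ≤ 600/169 * M * u^(δ-1) := le_of_forall_pos_le_add hmain
    have hfin : (600:ℝ)/169 * M * u^(δ-1) ≤ 4 * M * u^(δ-1) := by
      have hnn : (0:ℝ) ≤ M * u^(δ-1) := by positivity
      nlinarith [hnn]
    linarith
  -- final assembly
  have hgint : IntervalIntegrable (fun v : ℝ => 4*M*v^(δ-1)) volume 0 s := by
    have h1 : IntervalIntegrable (fun v : ℝ => v^(δ-1)) volume 0 s :=
      intervalIntegrable_rpow' (by linarith)
    exact h1.const_mul (4*M)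
  have haes : (∀ᵐ v ∂(volume.restrict (Set.uIoc 0 s)), ‖F v‖ ≤ 4*M*v^(δ-1)) := by
    have hone : ∀ᵐ (v:ℝ) ∂volume, v ≠ s := by
      have h0 : volume ({s} : Set ℝ) = 0 := Real.volume_singleton
      filter_upwards [MeasureTheory.measure_eq_zero_iff_ae_notMem.mp h0] with v hv
      simpa using hv
    filter_upwards [MeasureTheory.ae_restrict_mem measurableSet_uIoc,
      MeasureTheory.ae_restrict_of_ae hone] with v hv hvne
    rw [Set.uIoc_of_le hs0.le] at hv
    exact hpt v ⟨hv.1, lt_of_le_of_ne hv.2 hvne⟩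
  have hle := intervalIntegral.norm_integral_le_of_norm_le hs0.le
    ((MeasureTheory.ae_restrict_iff' measurableSet_Ioc).1 (by rwa [Set.uIoc_of_le hs0.le] at haes)) hgint
  have hcompute : ∫ v in (0:ℝ)..s, 4*M*v^(δ-1) = 4*M*s^δ/δ := by
    rw [intervalIntegral.integral_const_mul]
    rw [integral_rpow (Or.inl (by linarith : (-1:ℝ) < δ - 1))]
    rw [show δ - 1 + 1 = δ by ring, Real.zero_rpow hδ.ne']
    ring
  rw [hcompute] at hle
  exact hle
end
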